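/- For every natural number k, the class REG/k of languages over {0,1} recognized by a deterministic finite automaton with k-bit prefix advice is strictly contained in the class REG/1(⊙) of languages recognized by a deterministic finite automaton with at most one inkdot of advice: every language in REG/k is in REG/1(⊙), and the language { 0^m 1^m : m ∈ ℕ } is in REG/1(⊙) but not in REG/k. -/

import Mathlib

/-- The marked word: the i-th symbol of `w` becomes `(w_i, true)` if `i ∈ S`,
and `(w_i, false)` otherwise. -/
def markWord {α : Type*} (w : List α) (S : Finset ℕ) : List (α × Bool) :=
  (w.zipIdx.map Prod.swap).map (fun p => (p.2, decide (p.1 ∈ S)))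

/-- `L` is recognized by a deterministic finite automaton with at most `a n`
inkdots of advice on inputs of length `n`. -/
def RecognizedWithInkdots {α : Type*} (L : Set (List α)) (a : ℕ → ℕ) : Prop :=
  ∃ (σ : Type) (_ : Fintype σ) (M : DFA (α × Bool) σ) (h : ℕ → Finset ℕ),
    (∀ n, ∀ i ∈ h n, i < n) ∧
    (∀ n, (h n).card ≤ a n) ∧
    (∀ w : List α, w ∈ L ↔ markWord w (h w.length) ∈ M.accepts)
/-- `L` is recognized by a deterministic finite automaton with `k`-bit prefix advice. -/
def RecognizedWithPrefixAdvice {α : Type*} (L : Set (List α)) (k : ℕ) : Prop :=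
  ∃ (σ : Type) (_ : Fintype σ) (M : DFA (Bool ⊕ α) σ) (h : ℕ → Fin k → Bool),
    ∀ w : List α, w ∈ L ↔
      ((List.ofFn (h w.length)).map Sum.inl ++ w.map Sum.inr) ∈ M.accepts

set_option linter.unreachableTactic false
set_option linter.unusedTactic false
set_option linter.unusedVariables false

lemma markWord_append_singleton {α : Type*} (w : List α) (x : α) (S : Finset ℕ) :
    markWord (w ++ [x]) S = markWord w S ++ [(x, decide (w.length ∈ S))] := by
  simp [markWord, List.zipIdx_append]

def advN (k : ℕ) : ℕ := Fintype.card (Fin k → Bool)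

abbrev SimSt (k : ℕ) (σ : Type) : Type :=
  (Fin (advN k) → Bool) × Fin (advN k + 1) × Option (Fin (advN k)) × ((Fin k → Bool) → σ)

def simDFA (k : ℕ) {σ : Type} (M : DFA (Bool ⊕ Bool) σ) (L : Set (List Bool)) :
    DFA (Bool × Bool) (SimSt k σ) where
  step s x :=
    ( (if hc : (s.2.1 : ℕ) < advN k then Function.update s.1 ⟨s.2.1, hc⟩ x.1 else s.1),
      (if hc : (s.2.1 : ℕ) < advN k then ⟨(s.2.1 : ℕ) + 1, by omega⟩ else s.2.1),
      (if hc : (s.2.1 : ℕ) < advN k then (if x.2 then some ⟨s.2.1, hc⟩ else s.2.2.1)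
        else s.2.2.1),
      fun α => M.step (s.2.2.2 α) (Sum.inr x.1) )
  start := (fun _ => false, ⟨0, by omega⟩, none,
    fun α => M.evalFrom M.start ((List.ofFn α).map Sum.inl))
  accept := { s | ((s.2.1 : ℕ) < advN k ∧ (List.ofFn s.1).take (s.2.1 : ℕ) ∈ L)
    ∨ ((s.2.1 : ℕ) = advN k ∧ ∃ r : Fin (advN k), s.2.2.1 = some r ∧
        s.2.2.2 ((Fintype.equivFin (Fin k → Bool)).symm r) ∈ M.accept) }

lemma simDFA_step_g (k : ℕ) {σ : Type} (M : DFA (Bool ⊕ Bool) σ) (L : Set (List Bool))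
    (s : SimSt k σ) (x : Bool × Bool) :
    ((simDFA k M L).step s x).1
      = if hc : (s.2.1 : ℕ) < advN k then Function.update s.1 ⟨s.2.1, hc⟩ x.1 else s.1 := rfl

lemma simDFA_step_c (k : ℕ) {σ : Type} (M : DFA (Bool ⊕ Bool) σ) (L : Set (List Bool))
    (s : SimSt k σ) (x : Bool × Bool) :
    ((simDFA k M L).step s x).2.1
      = if hc : (s.2.1 : ℕ) < advN k then (⟨(s.2.1 : ℕ) + 1, by omega⟩ : Fin (advN k + 1))
        else s.2.1 := rfl

lemma simDFA_step_dot (k : ℕ) {σ : Type} (M : DFA (Bool ⊕ Bool) σ) (L : Set (List Bool))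
    (s : SimSt k σ) (x : Bool × Bool) :
    ((simDFA k M L).step s x).2.2.1
      = if hc : (s.2.1 : ℕ) < advN k then (if x.2 then some ⟨s.2.1, hc⟩ else s.2.2.1)
        else s.2.2.1 := rfl

lemma simDFA_step_sim (k : ℕ) {σ : Type} (M : DFA (Bool ⊕ Bool) σ) (L : Set (List Bool))
    (s : SimSt k σ) (x : Bool × Bool) :
    ((simDFA k M L).step s x).2.2.2 = fun α => M.step (s.2.2.2 α) (Sum.inr x.1) := rfl

lemma sim_eval (k : ℕ) {σ : Type} (M : DFA (Bool ⊕ Bool) σ) (L : Set (List Bool))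
    (S : Finset ℕ) (hSN : ∀ a ∈ S, a < advN k) (hSsub : ∀ a ∈ S, ∀ b ∈ S, a = b)
    (w : List Bool) :
    ((((simDFA k M L).evalFrom (simDFA k M L).start (markWord w S)).2.1 : ℕ)
        = min w.length (advN k)) ∧
    (∀ i : Fin (advN k), (i : ℕ) < w.length →
        ((simDFA k M L).evalFrom (simDFA k M L).start (markWord w S)).1 i
          = w.getD (i : ℕ) false) ∧
    (∀ r : Fin (advN k),
        ((simDFA k M L).evalFrom (simDFA k M L).start (markWord w S)).2.2.1 = some r
          ↔ ((r : ℕ) ∈ S ∧ (r : ℕ) < w.length)) ∧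
    (((simDFA k M L).evalFrom (simDFA k M L).start (markWord w S)).2.2.2
        = fun α => M.evalFrom (M.evalFrom M.start ((List.ofFn α).map Sum.inl))
            (w.map Sum.inr)) := by
  induction w using List.reverseRecOn with
  | nil =>
      have h0 : markWord ([] : List Bool) S = [] := by simp [markWord]
      refine ⟨?_, ?_, ?_, ?_⟩
      · rw [h0]
        show ((⟨0, by omega⟩ : Fin (advN k + 1)) : ℕ) = min ([] : List Bool).length (advN k)
        simp
      · intro i hi; simp at hi
      · intro r
        rw [h0]
        show (none : Option (Fin (advN k))) = some r ↔ _
        simp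
      · rw [h0]
        rfl
  | append_singleton w x ih =>
      obtain ⟨ih1, ih2, ih3, ih4⟩ := ih
      set sOld := (simDFA k M L).evalFrom (simDFA k M L).start (markWord w S) with hsOld
      have hstep : (simDFA k M L).evalFrom (simDFA k M L).start (markWord (w ++ [x]) S)
          = (simDFA k M L).step sOld (x, decide (w.length ∈ S)) := by
        rw [markWord_append_singleton, DFA.evalFrom_append_singleton]
      rw [hstep]
      set ℓ := w.length with hl
      have hlen' : (w ++ [x]).length = ℓ + 1 := by simp [hl]
      by_cases hcase : ℓ < advN k
      · -- counter below N : the if-branches are taken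
        have hcval : ((sOld.2.1 : ℕ)) = ℓ := by rw [ih1]; omega
        have hclt : (sOld.2.1 : ℕ) < advN k := by omega
        refine ⟨?_, ?_, ?_, ?_⟩
        · rw [simDFA_step_c, dif_pos hclt, hlen']
          simp [hcval]
          omega
        · intro i hi
          rw [simDFA_step_g, dif_pos hclt]
          rw [hlen'] at hi
          by_cases hie : (i : ℕ) = ℓ
          · have hgd : (w ++ [x]).getD (↑i) false = x := by
              rw [hie, List.getD_eq_getElem _ _ (by omega),
                List.getElem_append_right (by omega)]
              simp [show ℓ - w.length = 0 from by omega]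
            have hidx : i = (⟨(sOld.2.1 : ℕ), hclt⟩ : Fin (advN k)) := by
              apply Fin.ext; simp [hcval, hie]
            rw [hgd, hidx, Function.update_self]
          · have hne : i ≠ (⟨(sOld.2.1 : ℕ), hclt⟩ : Fin (advN k)) := by
              intro hcon
              apply hie
              rw [hcon]
              simp [hcval]
            rw [Function.update_of_ne hne]
            have hilt : (i : ℕ) < ℓ := by omega
            rw [ih2 i hilt]
            rw [List.getD_eq_getElem _ _ (by omega), List.getD_eq_getElem _ _ (by omega),
              List.getElem_append_left (by omega)]
        · intro r
          rw [simDFA_step_dot, dif_pos hclt, hlen']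
          simp only [Prod.snd]
          by_cases hmem : ℓ ∈ S
          · rw [if_pos (by simpa using hmem)]
            constructor
            · intro hsome
              have : r = (⟨sOld.2.1, hclt⟩ : Fin (advN k)) := by
                injection hsome.symm
              rw [this]
              constructor
              · simpa [hcval] using hmem
              · simp [hcval]
            · rintro ⟨hrS, _⟩
              have : (r : ℕ) = ℓ := hSsub _ hrS _ hmem
              congr 1
              apply Fin.ext
              simp [hcval, this]
          · rw [if_neg (by simpa using hmem)]
            rw [ih3 r]
            constructor
            · rintro ⟨h1, h2⟩; exact ⟨h1, by omega⟩
            · rintro ⟨h1, h2⟩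
              refine ⟨h1, ?_⟩
              have : (r : ℕ) ≠ ℓ := fun hcon => hmem (hcon ▸ h1)
              omega
        · rw [simDFA_step_sim]
          funext α
          rw [ih4]
          simp only [List.map_append, List.map_cons, List.map_nil]
          rw [DFA.evalFrom_append_singleton]
      · -- counter at N : else branches
        have hcval : ((sOld.2.1 : ℕ)) = advN k := by rw [ih1]; omega
        have hnlt : ¬ (sOld.2.1 : ℕ) < advN k := by omega
        refine ⟨?_, ?_, ?_, ?_⟩
        · rw [simDFA_step_c, dif_neg hnlt, hlen', hcval]
          omega
        · intro i hi
          rw [simDFA_step_g, dif_neg hnlt]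
          have hilt : (i : ℕ) < ℓ := by have := i.2; omega
          rw [ih2 i hilt]
          rw [List.getD_eq_getElem _ _ (by omega), List.getD_eq_getElem _ _ (by simp; omega),
            List.getElem_append_left (by omega)]
        · intro r
          rw [simDFA_step_dot, dif_neg hnlt, hlen', ih3 r]
          have := r.2
          constructor
          · rintro ⟨h1, h2⟩; exact ⟨h1, by omega⟩
          · rintro ⟨h1, h2⟩; exact ⟨h1, by omega⟩
        · rw [simDFA_step_sim]
          funext α
          rw [ih4]
          simp only [List.map_append, List.map_cons, List.map_nil]
          rw [DFA.evalFrom_append_singleton]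

lemma simDFA_accept_iff (k : ℕ) {σ : Type} (M : DFA (Bool ⊕ Bool) σ) (L : Set (List Bool))
    (s : SimSt k σ) :
    s ∈ (simDFA k M L).accept ↔
      (((s.2.1 : ℕ) < advN k ∧ (List.ofFn s.1).take (s.2.1 : ℕ) ∈ L)
        ∨ ((s.2.1 : ℕ) = advN k ∧ ∃ r : Fin (advN k), s.2.2.1 = some r ∧
            s.2.2.2 ((Fintype.equivFin (Fin k → Bool)).symm r) ∈ M.accept)) := Iff.rfl

lemma advN_eq (k : ℕ) : advN k = Fintype.card (Fin k → Bool) := rfl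

lemma part1 (k : ℕ) (L : Set (List Bool)) :
    RecognizedWithPrefixAdvice L k → RecognizedWithInkdots L (fun _ => 1) := by
  rintro ⟨σ, inst, M, h, spec⟩
  classical
  refine ⟨SimSt k σ, inferInstance, simDFA k M L,
    (fun n => if n < advN k then ∅
      else {((Fintype.equivFin (Fin k → Bool)) (h n) : ℕ)}), ?_, ?_, ?_⟩
  · intro n i hi
    dsimp only at hi
    by_cases hn : n < advN k
    · rw [if_pos hn] at hi; simp at hi
    · rw [if_neg hn] at hi
      rw [Finset.mem_singleton] at hi
      have h2 : (((Fintype.equivFin (Fin k → Bool)) (h n)) : ℕ) < advN k :=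
        ((Fintype.equivFin (Fin k → Bool)) (h n)).2
      omega
  · intro n
    dsimp only
    by_cases hn : n < advN k <;> simp [hn]
  · intro w
    dsimp only
    set n := w.length with hn
    by_cases hcase : n < advN k
    · rw [if_pos hcase]
      obtain ⟨inv1, inv2, inv3, inv4⟩ :=
        sim_eval k M L ∅ (by simp) (by simp) w
      show _ ↔ (simDFA k M L).evalFrom (simDFA k M L).start (markWord w ∅)
          ∈ (simDFA k M L).accept
      set s := (simDFA k M L).evalFrom (simDFA k M L).start (markWord w ∅) with hs
      rw [simDFA_accept_iff]
      have hc : (s.2.1 : ℕ) = n := by rw [inv1]; omega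
      have htake : (List.ofFn s.1).take (s.2.1 : ℕ) = w := by
        refine List.ext_getElem ?_ ?_
        · rw [List.length_take, List.length_ofFn, hc]
          omega
        · intro i h1 h2
          rw [List.getElem_take, List.getElem_ofFn]
          have hi : i < w.length := h2
          have hiN : i < advN k := by omega
          have h3 := inv2 ⟨i, hiN⟩ hi
          exact h3.trans (List.getD_eq_getElem w false hi)
      rw [htake]
      constructor
      · intro hw; exact Or.inl ⟨by omega, hw⟩
      · rintro (⟨_, hw⟩ | ⟨hcon, _⟩)
        · exact hw
        · omega
    · rw [if_neg hcase]
      set a : ℕ := ((Fintype.equivFin (Fin k → Bool)) (h n) : ℕ) with ha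
      have haN : a < advN k := by
        rw [ha, advN_eq]; exact ((Fintype.equivFin (Fin k → Bool)) (h n)).2
      obtain ⟨inv1, inv2, inv3, inv4⟩ :=
        sim_eval k M L {a} (by intro b hb; rw [Finset.mem_singleton] at hb; omega)
          (by intro b hb c hc; rw [Finset.mem_singleton] at hb hc; omega) w
      show _ ↔ (simDFA k M L).evalFrom (simDFA k M L).start (markWord w {a})
          ∈ (simDFA k M L).accept
      set s := (simDFA k M L).evalFrom (simDFA k M L).start (markWord w {a}) with hs
      rw [simDFA_accept_iff]
      have hc : (s.2.1 : ℕ) = advN k := by rw [inv1]; omega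
      have hdot : s.2.2.1 = some ⟨a, haN⟩ := by
        rw [inv3]
        refine ⟨by simp, ?_⟩
        show a < w.length
        omega
      have hsymm : (Fintype.equivFin (Fin k → Bool)).symm ⟨a, haN⟩ = h n := by
        have hfe : (⟨a, haN⟩ : Fin (advN k)) = (Fintype.equivFin (Fin k → Bool)) (h n) := by
          apply Fin.ext
          exact ha
        exact (congrArg (Fintype.equivFin (Fin k → Bool)).symm hfe).trans (Equiv.symm_apply_apply _ _)
      rw [spec w, ← hn, DFA.mem_accepts]
      constructor
      · intro hw
        refine Or.inr ⟨hc, ⟨a, haN⟩, hdot, ?_⟩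
        simp only [inv4]
        erw [hsymm]
        rw [← DFA.evalFrom_of_append]
        exact hw
      · rintro (⟨hcon, _⟩ | ⟨_, r, hr, hacc⟩)
        · omega
        · have hreq : r = ⟨a, haN⟩ := Option.some_inj.mp (hr.symm.trans hdot)
          subst hreq
          simp only [inv4] at hacc
          erw [hsymm] at hacc
          rw [← DFA.evalFrom_of_append] at hacc
          exact hacc


lemma markWord_length {α : Type*} (w : List α) (S : Finset ℕ) :
    (markWord w S).length = w.length := by simp [markWord]

lemma markWord_getElem {α : Type*} (w : List α) (S : Finset ℕ) (i : ℕ)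
    (hi : i < (markWord w S).length) :
    (markWord w S)[i] = (w[i]'(by rwa [markWord_length] at hi), decide (i ∈ S)) := by
  simp [markWord]

inductive St2 where
  | start | zeros | afterm | dead
deriving DecidableEq

instance : Fintype St2 where
  elems := {.start, .zeros, .afterm, .dead}
  complete := by intro x; cases x <;> simp

def M2 : DFA (Bool × Bool) St2 where
  step s x :=
    match s, x with
    | .start, (false,false) => .zeros
    | .start, (true,true) => .afterm
    | .zeros, (false,false) => .zeros
    | .zeros, (true,true) => .afterm
    | .afterm, (true,false) => .afterm
    | _, _ => .dead
  start := .start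
  accept := {.start, .afterm}

def shape (l : List (Bool × Bool)) : Prop :=
  ∃ a b, l = List.replicate a (false,false) ++ (true,true) :: List.replicate b (true,false)

def P2 : St2 → List (Bool × Bool) → Prop
  | .start, l => l = [] ∨ shape l
  | .zeros, l => shape l
  | .afterm, l => ∃ b, l = List.replicate b (true,false)
  | .dead, _ => False

lemma cons_shape (x : Bool × Bool) (t : List (Bool × Bool)) :
    shape (x :: t) ↔ (x = (false,false) ∧ shape t) ∨ (x = (true,true) ∧ ∃ b, t = List.replicate b (true,false)) := by
  constructor
  · rintro ⟨a, b, hab⟩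
    cases a with
    | zero =>
        simp only [List.replicate, List.nil_append, List.cons.injEq] at hab
        exact Or.inr ⟨hab.1, b, hab.2⟩
    | succ a =>
        rw [List.replicate_succ, List.cons_append, List.cons.injEq] at hab
        exact Or.inl ⟨hab.1, a, b, hab.2⟩
  · rintro (⟨rfl, a, b, rfl⟩ | ⟨rfl, b, rfl⟩)
    · exact ⟨a + 1, b, by rw [List.replicate_succ, List.cons_append]⟩
    · exact ⟨0, b, rfl⟩

lemma cons_rep (x : Bool × Bool) (t : List (Bool × Bool)) :
    (∃ b, x :: t = List.replicate b (true,false)) ↔ (x = (true,false) ∧ ∃ b, t = List.replicate b (true,false)) := by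
  constructor
  · rintro ⟨b, hb⟩
    cases b with
    | zero => simp at hb
    | succ b =>
        rw [List.replicate_succ, List.cons.injEq] at hb
        exact ⟨hb.1, b, hb.2⟩
  · rintro ⟨rfl, b, rfl⟩
    exact ⟨b + 1, by rw [List.replicate_succ]⟩

lemma evalP2 : ∀ (l : List (Bool × Bool)) (s : St2), (M2.evalFrom s l ∈ M2.accept ↔ P2 s l) := by
  intro l
  induction l with
  | nil =>
      intro s
      cases s <;>
        simp only [DFA.evalFrom, List.foldl_nil, M2, P2, Set.mem_insert_iff, Set.mem_singleton_iff] <;>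
        simp [shape]
  | cons x t ih =>
      intro s
      have hstep : M2.evalFrom s (x :: t) = M2.evalFrom (M2.step s x) t := rfl
      rw [hstep, ih]
      obtain ⟨x1, x2⟩ := x
      cases s <;> cases x1 <;> cases x2 <;>
        simp only [M2, P2, cons_shape, cons_rep] <;> simp [shape, cons_shape, cons_rep]

def H2 : ℕ → Finset ℕ := fun n => if n % 2 = 0 ∧ n ≠ 0 then {n / 2} else ∅

lemma mem_H2 {n i : ℕ} : i ∈ H2 n ↔ (n % 2 = 0 ∧ n ≠ 0 ∧ i = n / 2) := by
  unfold H2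
  split
  · next h => simp [Finset.mem_singleton]; tauto
  · next h => simp; tauto

lemma shape_getElem (a b i : ℕ)
    (hi : i < (List.replicate a (false,false) ++ (true,true) :: List.replicate b (true,false)).length) :
    (List.replicate a (false,false) ++ (true,true) :: List.replicate b (true,false))[i]
      = if i < a then (false, false) else if i = a then (true, true) else (true, false) := by
  by_cases h1 : i < a
  · rw [List.getElem_append_left (by simpa using h1), List.getElem_replicate]
    simp [h1]
  · rw [List.getElem_append_right (by simpa using Nat.le_of_not_lt h1)]
    simp only [List.length_replicate]
    rw [List.getElem_cons]
    by_cases h2 : i = a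
    · simp [h2]
    · have hz : ¬ (i - a = 0) := by omega
      rw [dif_neg hz, List.getElem_replicate]
      simp [h1, h2]

lemma part2 :
    RecognizedWithInkdots
      {w : List Bool | ∃ m : ℕ, w = List.replicate m false ++ List.replicate m true}
      (fun _ => 1) := by
  refine ⟨St2, inferInstance, M2, H2, ?_, ?_, ?_⟩
  · intro n i hi
    rw [mem_H2] at hi
    omega
  · intro n
    unfold H2
    split <;> simp
  · intro w
    rw [DFA.mem_accepts]
    show _ ↔ M2.evalFrom M2.start _ ∈ M2.accept
    rw [evalP2]
    constructor
    · rintro ⟨m, rfl⟩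
      have hlen : (List.replicate m false ++ List.replicate m true).length = m + m := by simp
      rw [hlen]
      cases m with
      | zero => exact Or.inl (by simp [markWord])
      | succ m =>
          refine Or.inr ⟨m + 1, m, ?_⟩
          have hH : H2 (m + 1 + (m + 1)) = {m + 1} := by
            unfold H2
            rw [if_pos (by omega)]
            congr 1
            omega
          rw [hH]
          refine List.ext_getElem (by rw [markWord_length]; simp; try omega) ?_
          intro i h1 h2
          rw [markWord_getElem, shape_getElem]
          have hi : i < (m+1) + (m+1) := by rwa [markWord_length, List.length_append,
            List.length_replicate, List.length_replicate] at h1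
          by_cases hc1 : i < m + 1
          · rw [List.getElem_append_left (by simpa using hc1), List.getElem_replicate]
            simp [hc1, Finset.mem_singleton]
            omega
          · rw [List.getElem_append_right (by simpa using Nat.le_of_not_lt hc1),
              List.getElem_replicate]
            by_cases hc2 : i = m + 1 <;> simp [hc1, hc2, Finset.mem_singleton] <;> omega
    · intro hP
      rcases hP with hnil | ⟨a, b, hl⟩
      · have : w.length = 0 := by
          have := congrArg List.length hnil
          rwa [markWord_length] at this
        exact ⟨0, by simpa using List.length_eq_zero_iff.mp this⟩
      · set n := w.length with hn
        have hlen : n = a + 1 + b := by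
          have h := congrArg List.length hl
          rw [markWord_length] at h
          simp at h
          omega
        -- the marked symbol
        have hmark : a ∈ H2 n := by
          have ha : a < (markWord w (H2 n)).length := by rw [markWord_length]; omega
          have hv := (List.getElem_of_eq hl ha).symm.trans (markWord_getElem w (H2 n) a ha)
          rw [shape_getElem] at hv
          simp only [lt_irrefl, if_false, if_neg (lt_irrefl a), if_pos rfl] at hv
          have h2 := congrArg Prod.snd hv
          simp at h2
          exact h2
        rw [mem_H2] at hmark
        obtain ⟨hpar, hne, rfl⟩ := hmark
        refine ⟨n / 2, ?_⟩
        have hw : ∀ i (hi : i < n), w[i]'(hi) = decide (n / 2 ≤ i) := by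
          intro i hi
          have hi' : i < (markWord w (H2 n)).length := by rwa [markWord_length]
          have hv := (List.getElem_of_eq hl hi').symm.trans (markWord_getElem w (H2 n) i hi')
          rw [shape_getElem] at hv
          have h1 := congrArg Prod.fst hv
          by_cases hc1 : i < n / 2
          · simp [hc1] at h1
            rw [decide_eq_false (by omega : ¬ n / 2 ≤ i)]
            first | exact h1 | exact h1.symm | simp [h1] | simp [← h1]
          · rw [decide_eq_true (by omega : n / 2 ≤ i)]
            by_cases hc2 : i = n / 2
            · subst hc2
              simp [hc1] at h1
              first | exact h1 | exact h1.symm | simp [h1] | simp [← h1]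
            · simp [hc1, hc2] at h1
              first | exact h1 | exact h1.symm | simp [h1] | simp [← h1]
        refine List.ext_getElem (by simp; omega) ?_
        intro i h1 h2
        rw [hw i h1]
        by_cases hc1 : i < n / 2
        · rw [List.getElem_append_left (by simpa using hc1), List.getElem_replicate]
          simp; omega
        · rw [List.getElem_append_right (by simpa using Nat.le_of_not_lt hc1),
            List.getElem_replicate]
          simp; omega


lemma DFA.evalFrom_replicate {α σ : Type*} (M : DFA α σ) (s : σ) (a : α) (n : ℕ) :
    M.evalFrom s (List.replicate n a) = (fun q => M.step q a)^[n] s := by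
  induction n generalizing s with
  | zero => rfl
  | succ n ih =>
      rw [List.replicate_succ]
      show M.evalFrom (M.step s a) (List.replicate n a) = _
      rw [ih, Function.iterate_succ_apply]

lemma exists_cycle {σ : Type*} [Fintype σ] (f : σ → σ) (x : σ) :
    ∃ c, 0 < c ∧ c ≤ Fintype.card σ ∧
      ∀ i, Fintype.card σ ≤ i → ∀ t, f^[i + t * c] x = f^[i] x := by
  obtain ⟨a, b, hne, heq⟩ := Fintype.exists_ne_map_eq_of_card_lt
    (fun i : Fin (Fintype.card σ + 1) => f^[(i : ℕ)] x) (by simp)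
  wlog hab : (a : ℕ) < (b : ℕ) generalizing a b
  · exact this b a hne.symm heq.symm (by omega)
  refine ⟨(b : ℕ) - (a : ℕ), by omega, by omega, ?_⟩
  have key : ∀ i, (a : ℕ) ≤ i → f^[i + ((b:ℕ) - (a:ℕ))] x = f^[i] x := by
    intro i hi
    have h1 : i + ((b:ℕ) - (a:ℕ)) = (i - (a:ℕ)) + (b:ℕ) := by omega
    have h2 : i = (i - (a:ℕ)) + (a:ℕ) := by omega
    rw [h1, Function.iterate_add_apply, ← heq, ← Function.iterate_add_apply, ← h2]
  intro i hi t
  induction t with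
  | zero => simp
  | succ t ih =>
      have : i + (t + 1) * ((b:ℕ) - (a:ℕ)) = (i + t * ((b:ℕ) - (a:ℕ))) + ((b:ℕ) - (a:ℕ)) := by ring
      rw [this, key _ (by omega), ih]

lemma part3 (k : ℕ) :
    ¬ RecognizedWithPrefixAdvice
      {w : List Bool | ∃ m : ℕ, w = List.replicate m false ++ List.replicate m true} k := by
  rintro ⟨σ, inst, M, h, spec⟩
  set S := Fintype.card σ with hS
  set m := S * S + S with hm
  set q := M.evalFrom M.start ((List.ofFn (h (m + m))).map Sum.inl) with hq
  set f0 : σ → σ := fun s => M.step s (Sum.inr false) with hf0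
  set f1 : σ → σ := fun s => M.step s (Sum.inr true) with hf1
  obtain ⟨c, hc0, hcS, hc⟩ := exists_cycle f0 q
  set p := f0^[m] q with hp
  obtain ⟨d, hd0, hdS, hd⟩ := exists_cycle f1 p
  set e := c * d with he
  have heS : e ≤ S * S := Nat.mul_le_mul hcS hdS
  have he1 : 1 ≤ e := Nat.one_le_iff_ne_zero.mpr (by positivity)
  -- evaluation of words of shape 0^a 1^b with the advice for length m+m
  have heval : ∀ a b : ℕ,
      M.evalFrom M.start ((List.ofFn (h (m + m))).map Sum.inl
        ++ (List.replicate a false ++ List.replicate b true).map Sum.inr)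
      = f1^[b] (f0^[a] q) := by
    intro a b
    rw [DFA.evalFrom_of_append, ← hq, List.map_append, List.map_replicate, List.map_replicate,
      DFA.evalFrom_of_append, DFA.evalFrom_replicate, DFA.evalFrom_replicate]
  -- u := 0^m 1^m is in L
  have hu : (List.replicate m false ++ List.replicate m true) ∈
      {w : List Bool | ∃ m : ℕ, w = List.replicate m false ++ List.replicate m true} := ⟨m, rfl⟩
  rw [spec] at hu
  have hulen : (List.replicate m false ++ List.replicate m true).length = m + m := by simp
  rw [hulen] at hu
  rw [DFA.mem_accepts] at hu
  -- v := 0^(m+e) 1^(m-e)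
  have hvlen : (List.replicate (m + e) false ++ List.replicate (m - e) true).length = m + m := by
    simp; omega
  -- same final state
  have hstate : f1^[m - e] (f0^[m + e] q) = f1^[m] (f0^[m] q) := by
    have h1 : f0^[m + e] q = f0^[m] q := by
      have : m + e = m + d * c := by rw [he]; ring
      rw [this, hc m (by omega) d]
    have h2 : f1^[m] p = f1^[m - e] p := by
      have h3 : m = (m - e) + c * d := by omega
      conv_lhs => rw [h3]
      rw [hd (m - e) (by omega) c]
    rw [h1, ← hp, ← h2, hp]
  have hv : (List.replicate (m + e) false ++ List.replicate (m - e) true) ∈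
      {w : List Bool | ∃ m : ℕ, w = List.replicate m false ++ List.replicate m true} := by
    rw [spec, hvlen, DFA.mem_accepts]
    show M.evalFrom M.start _ ∈ M.accept
    rw [heval, hstate, ← heval]
    exact hu
  obtain ⟨m', hm'⟩ := hv
  have hcount1 := congrArg (List.count false) hm'
  have hcount2 := congrArg (List.count true) hm'
  simp [List.count_append, List.count_replicate] at hcount1 hcount2
  omega


/-- `REG/k ⊊ REG/1(⊙)` over the alphabet `{0,1}`, witnessed by
`{0^m 1^m : m ∈ ℕ}`. -/
theorem prefix_advice_strictly_weaker_than_one_inkdot (k : ℕ) :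
    (∀ L : Set (List Bool),
        RecognizedWithPrefixAdvice L k → RecognizedWithInkdots L (fun _ => 1)) ∧
    RecognizedWithInkdots
      {w : List Bool | ∃ m : ℕ, w = List.replicate m false ++ List.replicate m true}
      (fun _ => 1) ∧
    ¬ RecognizedWithPrefixAdvice
      {w : List Bool | ∃ m : ℕ, w = List.replicate m false ++ List.replicate m true}
      k := by
  exact ⟨fun L => part1 k L, part2, part3 k⟩
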